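/- Let X be a metric space, S̄ a global control semigroup, and n ∈ ℕ. Then M-dim_S̄ X ≤ n if and only if there exists f ∈ S̄ such that for all sufficiently large s > 0 there is a cover of X equal to a union of n+1 families U₁,…,U_{n+1}, each family being s-disjoint and f(s)-bounded. -/

import Mathlib

open Filter Set Metric Topology
open scoped NNReal ENNReal

/-- A large-scale (asymptotic) dim-control function: continuous, increasing,
eventually at least the identity, tending to infinity. -/
def IsLSControl (f : ℝ≥0 → ℝ≥0) : Prop :=
  Continuous f ∧ Monotone f ∧ (∀ᶠ x in atTop, x ≤ f x) ∧ Tendsto f atTop atTop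

/-- Asymptotically linear: coincides with a linear function on a neighborhood of infinity. -/
def IsAsympLinear (f : ℝ≥0 → ℝ≥0) : Prop :=
  ∃ a b : ℝ≥0, ∀ᶠ x in atTop, f x = a * x + b

/-- A (large-scale) control semigroup. -/
def IsControlSemigroup (S : Set (ℝ≥0 → ℝ≥0)) : Prop :=
  (∀ f ∈ S, IsLSControl f) ∧
  (∀ f, IsLSControl f → IsAsympLinear f → f ∈ S) ∧
  (∀ f ∈ S, ∀ g ∈ S, f ∘ g ∈ S)

/-- A family of subsets is `s`-disjoint if distinct members are at distance `> s`. -/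
def SDisjoint {X : Type*} [MetricSpace X] (s : ℝ≥0) (𝒰 : Set (Set X)) : Prop :=
  ∀ U ∈ 𝒰, ∀ V ∈ 𝒰, U ≠ V → ∀ x ∈ U, ∀ y ∈ V, (s : ℝ) < dist x y

/-- A family of subsets is `D`-bounded if each member has diameter at most `D`. -/
def BoundedBy {X : Type*} [MetricSpace X] (D : ℝ≥0) (𝒰 : Set (Set X)) : Prop :=
  ∀ U ∈ 𝒰, EMetric.diam U ≤ (D : ℝ≥0∞)

/-- `asdim_S X ≤ n`. -/
def ASDimLE (S : Set (ℝ≥0 → ℝ≥0)) (X : Type*) [MetricSpace X] (n : ℕ) : Prop :=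
  ∃ f ∈ S, ∃ s₀ : ℝ≥0, ∀ s : ℝ≥0, s₀ ≤ s →
    ∃ 𝒰 : Fin (n + 1) → Set (Set X),
      (⋃ i, ⋃₀ 𝒰 i) = univ ∧ ∀ i, SDisjoint s (𝒰 i) ∧ BoundedBy (f s) (𝒰 i)

/-- The `S`-controlled asymptotic dimension, as an element of `ℕ∞`. -/
noncomputable def ASDim (S : Set (ℝ≥0 → ℝ≥0)) (X : Type*) [MetricSpace X] : ℕ∞ :=
  sInf {k : ℕ∞ | ∃ n : ℕ, k = n ∧ ASDimLE S X n}

/-- `S₁ ⪯ S₂` : `S₂` is finer than `S₁`. -/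
def Preceq (S₁ S₂ : Set (ℝ≥0 → ℝ≥0)) : Prop :=
  ∀ f ∈ S₂, ∃ g ∈ S₁, ∀ᶠ x in atTop, f x ≤ g x

/-- A small-scale dim-control function. -/
def IsSSControl (f : ℝ≥0 → ℝ≥0) : Prop :=
  Continuous f ∧ Monotone f ∧ f 0 = 0 ∧ ∀ᶠ x in 𝓝[>] (0 : ℝ≥0), x ≤ f x

/-- Coincides with a linear function on a neighborhood of `0`. -/
def IsLinearNearZero (f : ℝ≥0 → ℝ≥0) : Prop :=
  ∃ a b : ℝ≥0, ∀ᶠ x in 𝓝 (0 : ℝ≥0), f x = a * x + b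

/-- A small-scale control semigroup. -/
def IsSSControlSemigroup (ξ : Set (ℝ≥0 → ℝ≥0)) : Prop :=
  (∀ f ∈ ξ, IsSSControl f) ∧
  (∀ f, IsSSControl f → IsLinearNearZero f → f ∈ ξ) ∧
  (∀ f ∈ ξ, ∀ g ∈ ξ, f ∘ g ∈ ξ)

/-- A global dim-control function. -/
def IsGlobalControl (f : ℝ≥0 → ℝ≥0) : Prop :=
  Continuous f ∧ Monotone f ∧ f 0 = 0 ∧ Tendsto f atTop atTop ∧
    (∀ᶠ x in 𝓝[>] (0 : ℝ≥0), x ≤ f x) ∧ (∀ᶠ x in atTop, x ≤ f x)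

/-- A global control semigroup. -/
def IsGlobalControlSemigroup (S : Set (ℝ≥0 → ℝ≥0)) : Prop :=
  (∀ f ∈ S, IsGlobalControl f) ∧
  (∀ f, IsGlobalControl f → IsLinearNearZero f → IsAsympLinear f → f ∈ S) ∧
  (∀ f ∈ S, ∀ g ∈ S, f ∘ g ∈ S)

/-- `smdim_ξ X ≤ n`. -/
def SMDimLE (ξ : Set (ℝ≥0 → ℝ≥0)) (X : Type*) [MetricSpace X] (n : ℕ) : Prop :=
  ∃ f ∈ ξ, ∃ s₀ : ℝ≥0, 0 < s₀ ∧ ∀ s : ℝ≥0, 0 < s → s ≤ s₀ →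
    ∃ 𝒰 : Fin (n + 1) → Set (Set X),
      (⋃ i, ⋃₀ 𝒰 i) = univ ∧ ∀ i, SDisjoint s (𝒰 i) ∧ BoundedBy (f s) (𝒰 i)

/-- The `ξ`-controlled small-scale dimension. -/
noncomputable def SMDim (ξ : Set (ℝ≥0 → ℝ≥0)) (X : Type*) [MetricSpace X] : ℕ∞ :=
  sInf {k : ℕ∞ | ∃ n : ℕ, k = n ∧ SMDimLE ξ X n}

/-- `dim_S̄ X ≤ n` (global dimension). -/
def GDimLE (S : Set (ℝ≥0 → ℝ≥0)) (X : Type*) [MetricSpace X] (n : ℕ) : Prop :=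
  ∃ f ∈ S, ∀ s : ℝ≥0, 0 < s →
    ∃ 𝒰 : Fin (n + 1) → Set (Set X),
      (⋃ i, ⋃₀ 𝒰 i) = univ ∧ ∀ i, SDisjoint s (𝒰 i) ∧ BoundedBy (f s) (𝒰 i)

/-- The `S̄`-controlled global dimension. -/
noncomputable def GDim (S : Set (ℝ≥0 → ℝ≥0)) (X : Type*) [MetricSpace X] : ℕ∞ :=
  sInf {k : ℕ∞ | ∃ n : ℕ, k = n ∧ GDimLE S X n}

/-- Large-scale truncation `Trunc^{**}(S̄)`. -/
def TruncInf (S : Set (ℝ≥0 → ℝ≥0)) : Set (ℝ≥0 → ℝ≥0) :=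
  {g | IsLSControl g ∧ ∃ f ∈ S, ∀ᶠ x in atTop, g x = f x}

/-- Small-scale truncation `Trunc_{**}(S̄)`. -/
def TruncZero (S : Set (ℝ≥0 → ℝ≥0)) : Set (ℝ≥0 → ℝ≥0) :=
  {g | IsSSControl g ∧ ∃ f ∈ S, ∀ᶠ x in 𝓝 (0 : ℝ≥0), g x = f x}

/-- The linked set `Link(ξ, S)`. -/
def Link (ξ S : Set (ℝ≥0 → ℝ≥0)) : Set (ℝ≥0 → ℝ≥0) :=
  {g | Continuous g ∧ Monotone g ∧
    ∃ g₁ ∈ ξ, ∃ g₂ ∈ S, (∀ᶠ x in 𝓝 (0 : ℝ≥0), g x = g₁ x) ∧ (∀ᶠ x in atTop, g x = g₂ x)}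

/-- The distance function of an explicitly given metric space structure. -/
def MDist {X : Type*} (m : MetricSpace X) (x y : X) : ℝ :=
  @dist X m.toPseudoMetricSpace.toDist x y


/-- Padding a colored cover with repeated colors. -/
lemma pad_cover {X : Type*} {P : Set (Set X) → Prop} {k n : ℕ} (hkn : k ≤ n)
    (h : ∃ 𝒰 : Fin (k + 1) → Set (Set X), (⋃ i, ⋃₀ 𝒰 i) = univ ∧ ∀ i, P (𝒰 i)) :
    ∃ 𝒰 : Fin (n + 1) → Set (Set X), (⋃ i, ⋃₀ 𝒰 i) = univ ∧ ∀ i, P (𝒰 i) := by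
  obtain ⟨𝒰, hu, hp⟩ := h
  refine ⟨fun i => 𝒰 ⟨min i.val k, by omega⟩, ?_, fun i => hp _⟩
  apply eq_univ_of_univ_subset
  rw [← hu]
  refine iUnion_subset fun j => ?_
  have hj : (⟨min ((⟨j.val, by omega⟩ : Fin (n + 1)) : ℕ) k, by omega⟩ : Fin (k + 1)) = j :=
    Fin.ext (by simpa using Nat.min_eq_left (Nat.lt_succ_iff.mp j.isLt))
  exact subset_iUnion_of_subset (⟨j.val, by omega⟩ : Fin (n + 1))
    ((congrArg (fun z => ⋃₀ 𝒰 z) hj).symm.subset)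

lemma GDimLE_mono {S : Set (ℝ≥0 → ℝ≥0)} {X : Type*} [MetricSpace X] {k n : ℕ}
    (h : GDimLE S X k) (hkn : k ≤ n) : GDimLE S X n := by
  obtain ⟨f, hf, hc⟩ := h
  exact ⟨f, hf, fun s hs => pad_cover (P := fun 𝒱 => SDisjoint s 𝒱 ∧ BoundedBy (f s) 𝒱) hkn (hc s hs)⟩

lemma GDim_le_iff {S : Set (ℝ≥0 → ℝ≥0)} {X : Type*} [MetricSpace X] {n : ℕ} :
    GDim S X ≤ (n : ℕ∞) ↔ GDimLE S X n := by
  constructor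
  · intro h
    by_contra hn
    have hlb : ((n + 1 : ℕ) : ℕ∞) ≤ GDim S X := by
      apply le_sInf
      rintro k ⟨mm, rfl, hmm⟩
      by_contra hk
      push_neg at hk
      have hmn : mm ≤ n := by
        have : mm < n + 1 := by exact_mod_cast hk
        omega
      exact hn (GDimLE_mono hmm hmn)
    have hcon : ((n + 1 : ℕ) : ℕ∞) ≤ (n : ℕ∞) := hlb.trans h
    have : n + 1 ≤ n := by exact_mod_cast hcon
    omega
  · intro h
    exact sInf_le ⟨n, rfl, h⟩

lemma boundedBy_iff {X : Type*} [MetricSpace X] {D : ℝ≥0} {𝒰 : Set (Set X)} :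
    BoundedBy D 𝒰 ↔ ∀ U ∈ 𝒰, ∀ x ∈ U, ∀ y ∈ U, dist x y ≤ (D : ℝ) := by
  constructor
  · intro h U hU x hx y hy
    have h1 : edist x y ≤ (D : ℝ≥0∞) := (EMetric.edist_le_diam_of_mem hx hy).trans (h U hU)
    rw [edist_dist, ← ENNReal.ofReal_coe_nnreal] at h1
    exact (ENNReal.ofReal_le_ofReal_iff D.coe_nonneg).mp h1
  · intro h U hU
    refine EMetric.diam_le fun x hx y hy => ?_
    rw [edist_dist, ← ENNReal.ofReal_coe_nnreal]
    exact ENNReal.ofReal_le_ofReal (h U hU x hx y hy)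

/-- `M-dim_S̄ X ≤ n` iff there is `f ∈ S̄` such that for all sufficiently large `s`
there is a colored cover of `X` (in the original metric) by `n+1` families, each
`s`-disjoint and `f(s)`-bounded.  Here `M-dim_S̄ X` is the global dimension with
respect to the metric `d''_1` (`d''_1(x,y) = max (1, d(x,y))` for `x ≠ y`). -/
theorem Mdim_le_iff_large_scale_covers (X : Type*) (m : MetricSpace X)
    (Sb : Set (ℝ≥0 → ℝ≥0)) (hSb : IsGlobalControlSemigroup Sb) (n : ℕ)
    (m'' : MetricSpace X)
    (h'' : ∀ x y : X, x ≠ y → MDist m'' x y = max 1 (MDist m x y)) :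
    @GDim Sb X m'' ≤ (n : ℕ∞) ↔
      ∃ f ∈ Sb, ∃ s₀ : ℝ≥0, ∀ s : ℝ≥0, s₀ ≤ s →
        ∃ 𝒰 : Fin (n + 1) → Set (Set X),
          (⋃ i, ⋃₀ 𝒰 i) = univ ∧
          ∀ i, @SDisjoint X m s (𝒰 i) ∧ @BoundedBy X m (f s) (𝒰 i) := by
  have hd'' : ∀ x y : X, x ≠ y →
      @dist X m''.toPseudoMetricSpace.toDist x y
        = max 1 (@dist X m.toPseudoMetricSpace.toDist x y) := h''
  rw [@GDim_le_iff Sb X m'' n]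
  constructor
  · rintro ⟨f, hfS, hcov⟩
    refine ⟨f, hfS, 1, fun s hs => ?_⟩
    have hs0 : (0 : ℝ≥0) < s := lt_of_lt_of_le one_pos hs
    obtain ⟨𝒰, hU, hprop⟩ := hcov s hs0
    refine ⟨𝒰, hU, fun i => ⟨?_, ?_⟩⟩
    · intro U hU' V hV' hUV x hx y hy
      have hd := (hprop i).1 U hU' V hV' hUV x hx y hy
      by_cases hxy : x = y
      · exfalso
        subst hxy
        rw [@dist_self X m''.toPseudoMetricSpace x] at hd
        have : (0 : ℝ) < (s : ℝ) := by exact_mod_cast hs0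
        linarith
      · rw [hd'' x y hxy] at hd
        have h1s : (1 : ℝ) ≤ (s : ℝ) := by exact_mod_cast hs
        rcases lt_max_iff.mp hd with h1 | h2
        · linarith
        · exact h2
    · refine (@boundedBy_iff X m _ _).mpr ?_
      intro U hU' x hx y hy
      have hb := (@boundedBy_iff X m'' _ _).mp (hprop i).2 U hU' x hx y hy
      refine le_trans ?_ hb
      by_cases hxy : x = y
      · subst hxy
        rw [@dist_self X m.toPseudoMetricSpace x, @dist_self X m''.toPseudoMetricSpace x]
      · rw [hd'' x y hxy]
        exact le_max_right _ _
  · rintro ⟨f, hfS, s₀, hcov⟩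
    have hgc := hSb.1 f hfS
    have hmono : Monotone f := hgc.2.1
    obtain ⟨c, hc1, hc2⟩ : ∃ c : ℝ≥0, max s₀ 1 ≤ c ∧ 1 ≤ f c :=
      ((eventually_ge_atTop (max s₀ 1)).and (hgc.2.2.2.1.eventually_ge_atTop 1)).exists
    set a : ℝ≥0 := c + 1 with ha_def
    have ha : (1 : ℝ≥0) ≤ a := le_add_self
    have hax : ∀ x : ℝ≥0, x ≤ a * x := fun x => le_mul_of_one_le_left zero_le ha
    have hhgc : IsGlobalControl (fun x : ℝ≥0 => a * x) := by
      refine ⟨continuous_const.mul continuous_id, fun x y h => mul_le_mul_of_nonneg_left h zero_le,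
        mul_zero a, tendsto_atTop_mono hax tendsto_id,
        Eventually.of_forall hax, Eventually.of_forall hax⟩
    have hhS : (fun x : ℝ≥0 => a * x) ∈ Sb :=
      hSb.2.1 _ hhgc ⟨a, 0, Eventually.of_forall fun x => (add_zero _).symm⟩
        ⟨a, 0, Eventually.of_forall fun x => (add_zero _).symm⟩
    have hgS : f ∘ (fun x : ℝ≥0 => a * x) ∈ Sb := hSb.2.2 f hfS _ hhS
    refine ⟨f ∘ (fun x : ℝ≥0 => a * x), hgS, fun s hs => ?_⟩
    by_cases hs1 : s < 1
    · refine ⟨fun _ => {U : Set X | ∃ x : X, U = {x}}, ?_, fun i => ⟨?_, ?_⟩⟩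
      · refine eq_univ_iff_forall.mpr fun x => ?_
        exact mem_iUnion.mpr ⟨0, {x}, ⟨x, rfl⟩, rfl⟩
      · rintro U ⟨x₀, rfl⟩ V ⟨y₀, rfl⟩ hUV x hx y hy
        have hx' : x = x₀ := hx
        have hy' : y = y₀ := hy
        subst hx'; subst hy'
        have hxy : x ≠ y := fun h => hUV (by rw [h])
        rw [hd'' x y hxy]
        have : (s : ℝ) < 1 := by exact_mod_cast hs1
        exact lt_max_iff.mpr (Or.inl this)
      · refine (@boundedBy_iff X m'' _ _).mpr ?_
        rintro U ⟨x₀, rfl⟩ x hx y hy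
        have hx' : x = x₀ := hx
        have hy' : y = x₀ := hy
        subst hx'; subst hy'
        rw [@dist_self X m''.toPseudoMetricSpace]
        exact ((f ∘ fun z : ℝ≥0 => a * z) s).coe_nonneg
    · push_neg at hs1
      set t : ℝ≥0 := max s c with ht_def
      have hts₀ : s₀ ≤ t :=
        le_trans (le_trans (le_max_left s₀ 1) hc1) (le_max_right s c)
      obtain ⟨𝒰, hU, hprop⟩ := hcov t hts₀
      have hst : s ≤ t := le_max_left s c
      have hat : t ≤ a * s := by
        refine max_le (hax s) ?_
        calc c ≤ c * s := le_mul_of_one_le_right zero_le hs1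
        _ ≤ a * s := mul_le_mul_of_nonneg_right le_self_add zero_le
      refine ⟨𝒰, hU, fun i => ⟨?_, ?_⟩⟩
      · intro U hU' V hV' hUV x hx y hy
        have hd := (hprop i).1 U hU' V hV' hUV x hx y hy
        have hst' : (s : ℝ) ≤ (t : ℝ) := by exact_mod_cast hst
        have hxy : x ≠ y := by
          intro h
          subst h
          rw [@dist_self X m.toPseudoMetricSpace x] at hd
          have h1s : (1 : ℝ) ≤ (s : ℝ) := by exact_mod_cast hs1
          linarith
        rw [hd'' x y hxy]
        exact lt_max_iff.mpr (Or.inr (lt_of_le_of_lt hst' hd))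
      · refine (@boundedBy_iff X m'' _ _).mpr ?_
        intro U hU' x hx y hy
        have hb := (@boundedBy_iff X m _ _).mp (hprop i).2 U hU' x hx y hy
        have hfta : f t ≤ f (a * s) := hmono hat
        have h1f : (1 : ℝ≥0) ≤ f (a * s) :=
          hc2.trans (hmono (le_trans (le_max_right s c) hat))
        show @dist X m''.toPseudoMetricSpace.toDist x y ≤ ((f (a * s) : ℝ≥0) : ℝ)
        by_cases hxy : x = y
        · subst hxy
          rw [@dist_self X m''.toPseudoMetricSpace x]
          exact (f (a * s)).coe_nonneg
        · rw [hd'' x y hxy]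
          refine max_le ?_ ?_
          · exact_mod_cast h1f
          · refine hb.trans ?_
            exact_mod_cast hfta
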